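/- Let φ = (f,g) be a weighted homogeneous polynomial map of degrees (m, 2m) with m ≥ 2 even, mapping the hyperquadric Q = {Im w = ⟨z,z⟩} into itself. Then g(z,u) - conj(g)(0,u) = 2i⟨f(z,u), f(0,u)⟩ for all z ∈ C^n and real u, where conj(g) denotes the polynomial with conjugated coefficients. -/

import Mathlib

open Complex MvPolynomial

private lemma real_vanish_fin : ∀ {k : ℕ} (p : MvPolynomial (Fin k) ℂ),
    (∀ x : Fin k → ℝ, eval (fun i => (x i : ℂ)) p = 0) → p = 0 := by
  intro k
  induction k with
  | zero =>
    intro p h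
    apply MvPolynomial.funext (q := 0)
    intro x
    have hx : x = fun i => ((i.elim0 : ℝ) : ℂ) := funext fun i => i.elim0
    rw [map_zero, hx]
    exact h fun i => i.elim0
  | succ k ih =>
    intro p h
    apply (finSuccEquiv ℂ k).injective
    simp only [map_zero]
    apply Polynomial.ext
    intro i
    rw [Polynomial.coeff_zero]
    apply ih
    intro x
    rw [← coeff_eval_eq_eval_coeff]
    have h0 : Polynomial.map (eval fun j => (x j : ℂ)) (finSuccEquiv ℂ k p) = 0 := by
      apply Polynomial.eq_zero_of_infinite_isRoot
      apply Set.Infinite.mono (s := Set.range ((↑) : ℝ → ℂ))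
      · rintro _ ⟨t, rfl⟩
        show Polynomial.IsRoot _ _
        rw [Polynomial.IsRoot, ← eval_eq_eval_mv_eval']
        have : (Fin.cons (t : ℂ) fun j => (x j : ℂ)) = fun i => (((Fin.cons t x : Fin (k+1) → ℝ) i : ℝ) : ℂ) := by
          funext i
          refine Fin.cases ?_ (fun j => ?_) i <;> simp
        rw [this]
        exact h _
      · exact Set.infinite_range_of_injective Complex.ofReal_injective
    rw [h0, Polynomial.coeff_zero]

private lemma real_vanish {σ : Type*} [Fintype σ] (p : MvPolynomial σ ℂ)
    (h : ∀ x : σ → ℝ, eval (fun i => (x i : ℂ)) p = 0) : p = 0 := by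
  classical
  let e := Fintype.equivFin σ
  have h2 : rename e p = 0 := by
    apply real_vanish_fin
    intro x
    rw [eval_rename]
    exact h (x ∘ e)
  have := rename_injective (R := ℂ) e e.injective
  apply this
  rw [h2, map_zero]

private lemma eval_aeval' {σ τ : Type*} (x : τ → ℂ) (s : σ → MvPolynomial τ ℂ)
    (Q : MvPolynomial σ ℂ) :
    eval x (aeval s Q) = eval (fun i => eval x (s i)) Q := by
  rw [aeval_def, algebraMap_eq, eval₂_comp_left (eval x)]
  have hc : (eval x).comp (C : ℂ →+* MvPolynomial τ ℂ) = RingHom.id ℂ := by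
    refine RingHom.ext fun r => ?_
    simp
  rw [hc, eval₂_id]
  rfl

private lemma conj_eval {σ : Type*} (y : σ → ℂ) (Q : MvPolynomial σ ℂ) :
    (starRingEnd ℂ) (eval y Q) =
      eval (fun i => (starRingEnd ℂ) (y i)) (map (starRingEnd ℂ) Q) := by
  rw [eval_map]
  rw [← eval₂_id (g := y) Q, eval₂_comp_left (starRingEnd ℂ)]
  rfl

private lemma eval_aeval_snoc {n : ℕ} {σ : Type*} (x : σ → ℂ) (a : Fin n → MvPolynomial σ ℂ)
    (T : MvPolynomial σ ℂ) (Q : MvPolynomial (Fin (n + 1)) ℂ) :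
    eval x (aeval (Fin.snoc a T) Q) =
      eval (Fin.snoc (fun j => eval x (a j)) (eval x T)) Q := by
  rw [eval_aeval']
  have hfun : (fun i => eval x ((Fin.snoc a T : Fin (n+1) → MvPolynomial σ ℂ) i)) =
      Fin.snoc (fun j => eval x (a j)) (eval x T) := by
    funext i
    exact congrFun (Fin.comp_snoc (⇑(eval x)) a T) i
  rw [hfun]

private lemma conj_eval_snoc {n : ℕ} (Q : MvPolynomial (Fin (n + 1)) ℂ) (z : Fin n → ℂ) (w : ℂ) :
    eval (Fin.snoc (fun j => (starRingEnd ℂ) (z j)) ((starRingEnd ℂ) w))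
        (map (starRingEnd ℂ) Q) = (starRingEnd ℂ) (eval (Fin.snoc z w) Q) := by
  rw [conj_eval]
  have hfun : (fun i => (starRingEnd ℂ) ((Fin.snoc z w : Fin (n+1) → ℂ) i)) =
      Fin.snoc (fun j => (starRingEnd ℂ) (z j)) ((starRingEnd ℂ) w) := by
    funext i
    exact congrFun (Fin.comp_snoc (⇑(starRingEnd ℂ)) z w) i
  rw [hfun]

private lemma polarize {n : ℕ} (P : MvPolynomial (Fin n ⊕ Fin n) ℂ)
    (h : ∀ z : Fin n → ℂ,
      eval (Sum.elim z fun j => (starRingEnd ℂ) (z j)) P = 0) : P = 0 := by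
  classical
  set subR : Fin n ⊕ Fin n → MvPolynomial (Fin n ⊕ Fin n) ℂ :=
    Sum.elim (fun j => X (Sum.inl j) + C Complex.I * X (Sum.inr j))
      (fun j => X (Sum.inl j) - C Complex.I * X (Sum.inr j)) with hsubR
  set subInv : Fin n ⊕ Fin n → MvPolynomial (Fin n ⊕ Fin n) ℂ :=
    Sum.elim (fun j => C (1 / 2 : ℂ) * (X (Sum.inl j) + X (Sum.inr j)))
      (fun j => C (-Complex.I / 2) * (X (Sum.inl j) - X (Sum.inr j))) with hsubInv
  have hQ : aeval subR P = 0 := by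
    apply real_vanish
    intro x
    rw [eval_aeval']
    set z : Fin n → ℂ := fun j => (x (Sum.inl j) : ℂ) + Complex.I * (x (Sum.inr j) : ℂ) with hz
    have he : (fun i => eval (fun i => (x i : ℂ)) (subR i)) =
        Sum.elim z fun j => (starRingEnd ℂ) (z j) := by
      funext i
      cases i with
      | inl j => simp [hsubR, hz]
      | inr j =>
        simp [hsubR, hz, map_add, map_mul, Complex.conj_I, Complex.conj_ofReal]
        ring
    rw [he]
    exact h z
  have hcomp : aeval subInv (aeval subR P) = P := by
    have h1 : (aeval subInv).comp (aeval (R := ℂ) subR) =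
        aeval (fun i => aeval subInv (subR i)) := comp_aeval (f := subR) (aeval subInv)
    have hc1 : (C Complex.I : MvPolynomial (Fin n ⊕ Fin n) ℂ) * C (-Complex.I / 2) =
        C (1 / 2 : ℂ) := by
      rw [← C_mul]
      congr 1
      have := Complex.I_mul_I
      field_simp
      linear_combination -this
    have hc2 : (C (1 / 2 : ℂ) : MvPolynomial (Fin n ⊕ Fin n) ℂ) + C (1 / 2 : ℂ) = 1 := by
      rw [← C_add]
      norm_num
    have h2 : (fun i => aeval subInv (subR i)) = (X : Fin n ⊕ Fin n → _) := by
      funext i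
      cases i with
      | inl j =>
        simp only [hsubR, hsubInv, Sum.elim_inl, Sum.elim_inr, map_add, map_mul, map_sub, aeval_X,
          aeval_C, algebraMap_eq]
        linear_combination (X (Sum.inl j) - X (Sum.inr j)) * hc1 + X (Sum.inl j) * hc2
      | inr j =>
        simp only [hsubR, hsubInv, Sum.elim_inl, Sum.elim_inr, map_add, map_mul, map_sub, aeval_X,
          aeval_C, algebraMap_eq]
        linear_combination (X (Sum.inr j) - X (Sum.inl j)) * hc1 + X (Sum.inr j) * hc2
    calc aeval subInv (aeval subR P) = ((aeval subInv).comp (aeval (R := ℂ) subR)) P := rfl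
      _ = aeval (fun i => aeval subInv (subR i)) P := by rw [h1]
      _ = P := by rw [h2, aeval_X_left_apply]
  rw [← hcomp, hQ, map_zero]

/-- For an even-degree weighted homogeneous polynomial map `(f,g)` of `Q` into `Q`,
`g(z,u) - conj(g)(0,u) = 2i⟨f(z,u), f(0,u)⟩` for all `z ∈ ℂⁿ` and real `u`. -/
theorem stmt_1 (n m : ℕ) (hm : 2 ≤ m) (hme : Even m)
    (F : Fin n → MvPolynomial (Fin (n + 1)) ℂ)
    (G : MvPolynomial (Fin (n + 1)) ℂ)
    (f : (Fin n → ℂ) → ℂ → (Fin n → ℂ)) (g : (Fin n → ℂ) → ℂ → ℂ)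
    (hfP : ∀ (z : Fin n → ℂ) (w : ℂ) (j : Fin n),
      f z w j = MvPolynomial.eval (Fin.snoc z w) (F j))
    (hgP : ∀ (z : Fin n → ℂ) (w : ℂ), g z w = MvPolynomial.eval (Fin.snoc z w) G)
    (hfh : ∀ (μ : ℂ) (z : Fin n → ℂ) (w : ℂ), f (μ • z) (μ ^ 2 * w) = μ ^ m • f z w)
    (hgh : ∀ (μ : ℂ) (z : Fin n → ℂ) (w : ℂ), g (μ • z) (μ ^ 2 * w) = μ ^ (2 * m) * g z w)
    (hmap : ∀ (z : Fin n → ℂ) (w : ℂ), w.im = ∑ j, ‖z j‖ ^ 2 →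
      (g z w).im = ∑ j, ‖f z w j‖ ^ 2) :
    ∀ (z : Fin n → ℂ) (u : ℝ),
      g z (u : ℂ) - (starRingEnd ℂ) (g 0 (u : ℂ)) =
        2 * Complex.I * ∑ j, f z (u : ℂ) j * (starRingEnd ℂ) (f 0 (u : ℂ) j) := by
  intro z u
  classical
  set T1 : MvPolynomial (Fin n ⊕ Fin n) ℂ :=
    C (u : ℂ) + C Complex.I * ∑ j, X (Sum.inl j) * X (Sum.inr j) with hT1
  set T2 : MvPolynomial (Fin n ⊕ Fin n) ℂ :=
    C (u : ℂ) - C Complex.I * ∑ j, X (Sum.inl j) * X (Sum.inr j) with hT2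
  set S1 : Fin (n + 1) → MvPolynomial (Fin n ⊕ Fin n) ℂ :=
    Fin.snoc (fun j => X (Sum.inl j)) T1 with hS1
  set S2 : Fin (n + 1) → MvPolynomial (Fin n ⊕ Fin n) ℂ :=
    Fin.snoc (fun j => X (Sum.inr j)) T2 with hS2
  set P : MvPolynomial (Fin n ⊕ Fin n) ℂ :=
    aeval S1 G - aeval S2 (map (starRingEnd ℂ) G) -
      C (2 * Complex.I) * ∑ j, aeval S1 (F j) * aeval S2 (map (starRingEnd ℂ) (F j)) with hP
  have key1 : ∀ (x : Fin n ⊕ Fin n → ℂ) (Q : MvPolynomial (Fin (n + 1)) ℂ),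
      eval x (aeval S1 Q) = eval (Fin.snoc (fun j => x (Sum.inl j)) (eval x T1)) Q := by
    intro x Q
    rw [hS1, eval_aeval_snoc]
    simp
  have key2 : ∀ (x : Fin n ⊕ Fin n → ℂ) (Q : MvPolynomial (Fin (n + 1)) ℂ),
      eval x (aeval S2 Q) = eval (Fin.snoc (fun j => x (Sum.inr j)) (eval x T2)) Q := by
    intro x Q
    rw [hS2, eval_aeval_snoc]
    simp
  have hcc : ∀ c : ℂ, c * (starRingEnd ℂ) c = ((‖c‖ ^ 2 : ℝ) : ℂ) := by
    intro c
    rw [Complex.mul_conj]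
    norm_cast
    exact (Complex.sq_norm c).symm
  have hPz : P = 0 := by
    apply polarize
    intro z'
    set x : Fin n ⊕ Fin n → ℂ := Sum.elim z' fun j => (starRingEnd ℂ) (z' j) with hx
    set w : ℂ := (u : ℂ) + Complex.I * ((∑ j, ‖z' j‖ ^ 2 : ℝ) : ℂ) with hw
    have hxl : (fun j => x (Sum.inl j)) = z' := by funext j; simp [hx]
    have hxr : (fun j => x (Sum.inr j)) = fun j => (starRingEnd ℂ) (z' j) := by
      funext j; simp [hx]
    have hs : ∑ j, z' j * (starRingEnd ℂ) (z' j) = ((∑ j, ‖z' j‖ ^ 2 : ℝ) : ℂ) := by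
      rw [Complex.ofReal_sum]
      exact Finset.sum_congr rfl fun j _ => hcc (z' j)
    have hT1e : eval x T1 = w := by
      simp only [hT1, hw, map_add, map_mul, map_sum, map_sub, eval_C, eval_X, hx, Sum.elim_inl,
        Sum.elim_inr]
      rw [hs]
    have hT2e : eval x T2 = (starRingEnd ℂ) w := by
      simp only [hT2, hw, map_add, map_mul, map_sum, map_sub, eval_C, eval_X, hx, Sum.elim_inl,
        Sum.elim_inr, Complex.conj_I, Complex.conj_ofReal]
      rw [hs]
      ring
    have him : w.im = ∑ j, ‖z' j‖ ^ 2 := by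
      rw [hw, Complex.add_im, Complex.ofReal_im, Complex.mul_im, Complex.I_re, Complex.I_im,
        Complex.ofReal_re, Complex.ofReal_im]
      ring
    have himg := hmap z' w him
    have e1 : eval x (aeval S1 G) = g z' w := by
      rw [key1, hT1e, hxl, ← hgP]
    have e2 : eval x (aeval S2 (map (starRingEnd ℂ) G)) = (starRingEnd ℂ) (g z' w) := by
      rw [key2, hT2e, hxr, conj_eval_snoc, ← hgP]
    have e3 : ∀ j, eval x (aeval S1 (F j)) = f z' w j := by
      intro j
      rw [key1, hT1e, hxl, ← hfP]
    have e4 : ∀ j, eval x (aeval S2 (map (starRingEnd ℂ) (F j))) =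
        (starRingEnd ℂ) (f z' w j) := by
      intro j
      rw [key2, hT2e, hxr, conj_eval_snoc, ← hfP]
    rw [hP]
    simp only [map_sub, map_mul, map_sum, eval_C, e1, e2, e3, e4]
    have hsum : ∑ j, f z' w j * (starRingEnd ℂ) (f z' w j) =
        ((∑ j, ‖f z' w j‖ ^ 2 : ℝ) : ℂ) := by
      rw [Complex.ofReal_sum]
      exact Finset.sum_congr rfl fun j _ => hcc (f z' w j)
    rw [hsum, ← himg, Complex.sub_conj]
    push_cast
    ring
  set x0 : Fin n ⊕ Fin n → ℂ := Sum.elim z fun _ => 0 with hx0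
  have hxl0 : (fun j => x0 (Sum.inl j)) = z := by funext j; simp [hx0]
  have hxr0 : (fun j => x0 (Sum.inr j)) = fun _ => (0 : ℂ) := by funext j; simp [hx0]
  have hT10 : eval x0 T1 = (u : ℂ) := by
    simp [hT1, hx0]
  have hT20 : eval x0 T2 = (u : ℂ) := by
    simp [hT2, hx0]
  have f1 : eval x0 (aeval S1 G) = g z (u : ℂ) := by
    rw [key1, hT10, hxl0, ← hgP]
  have f2 : eval x0 (aeval S2 (map (starRingEnd ℂ) G)) = (starRingEnd ℂ) (g 0 (u : ℂ)) := by
    rw [key2, hT20, hxr0, hgP]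
    have h := conj_eval_snoc G (0 : Fin n → ℂ) ((u : ℂ))
    simp only [Pi.zero_apply, map_zero, Complex.conj_ofReal] at h
    exact h
  have f3 : ∀ j, eval x0 (aeval S1 (F j)) = f z (u : ℂ) j := by
    intro j
    rw [key1, hT10, hxl0, ← hfP]
  have f4 : ∀ j, eval x0 (aeval S2 (map (starRingEnd ℂ) (F j))) =
      (starRingEnd ℂ) (f 0 (u : ℂ) j) := by
    intro j
    rw [key2, hT20, hxr0, hfP]
    have h := conj_eval_snoc (F j) (0 : Fin n → ℂ) ((u : ℂ))
    simp only [Pi.zero_apply, map_zero, Complex.conj_ofReal] at h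
    exact h
  have h0 : eval x0 P = 0 := by rw [hPz, map_zero]
  rw [hP] at h0
  simp only [map_sub, map_mul, map_sum, eval_C, f1, f2, f3, f4] at h0
  linear_combination h0
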